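/- Assume k − 1 ≤ LR. The part incoming weights of π^(k) are nonincreasing over the cluster positions, i.e. w_1(π^(k)) ≥ w_2(π^(k)) ≥ … ≥ w_{k−1}(π^(k)); moreover the weight of the separate position, w_k(π^(k)) = (R + d_C − k)·β_C = (d_I + d_C + 1 − k)·β_C, is the minimum: w_k(π^(k)) ≤ w_i(π^(k)) for every 1 ≤ i ≤ k. -/

import Mathlib

/-- Relative location `h_π(i) = #{1 ≤ j ≤ i : π j = π i}`. -/
def relLoc (π : ℕ → ℕ) (i : ℕ) : ℕ :=
  ((Finset.Icc 1 i).filter (fun j => π j = π i)).card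

/-- Intra-cluster coefficient `a_i(π) = d_I + 1 − h_π(i)` (truncated subtraction). -/
def aCoef (dI : ℕ) (π : ℕ → ℕ) (i : ℕ) : ℕ :=
  dI + 1 - relLoc π i

/-- Cross-cluster coefficient `b_i(π) = max(0, d_C − (i − h_π(i)))` (truncated subtraction). -/
def bCoef (dC : ℕ) (π : ℕ → ℕ) (i : ℕ) : ℕ :=
  dC - (i - relLoc π i)

/-- Part incoming weight `w_i(π)`: for a separate position (`π i = 0`) it is
`(d_I + d_C + 1 − i)·β_C`, otherwise `a_i(π)·β_I + b_i(π)·β_C`. -/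
noncomputable def weight (dI dC : ℕ) (βI βC : ℝ) (π : ℕ → ℕ) (i : ℕ) : ℝ :=
  if π i = 0 then ((dI + dC + 1 - i : ℕ) : ℝ) * βC
  else (aCoef dI π i : ℝ) * βI + (bCoef dC π i : ℝ) * βC

/-- Min-cut `MC(π) = Σ_{i=1}^k min(α, w_i(π))`. -/
noncomputable def MC (k dI dC : ℕ) (βI βC α : ℝ) (π : ℕ → ℕ) : ℝ :=
  ∑ i ∈ Finset.Icc 1 k, min α (weight dI dC βI βC π i)

/-- A cluster order: a `k`-tuple with entries in `{0, 1, …, L}`. -/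
def IsClusterOrder (L k : ℕ) (π : ℕ → ℕ) : Prop :=
  ∀ i, 1 ≤ i → i ≤ k → π i ≤ L

/-- A selected node distribution `(s_0, s_1, …, s_L)`:
`R ≥ s_1 ≥ s_2 ≥ … ≥ s_L` and `s_0 + s_1 + … + s_L = k`. -/
def IsDist (L R k : ℕ) (s : ℕ → ℕ) : Prop :=
  (∀ i, 1 ≤ i → i + 1 ≤ L → s (i + 1) ≤ s i) ∧
  (∀ i, 1 ≤ i → i ≤ L → s i ≤ R) ∧
  ∑ i ∈ Finset.range (L + 1), s i = k

/-- `π ∈ Π(s)`: `π` is a cluster order with `#{1 ≤ j ≤ k : π j = c} = s c` for all `0 ≤ c ≤ L`. -/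
def MemPi (L k : ℕ) (s : ℕ → ℕ) (π : ℕ → ℕ) : Prop :=
  IsClusterOrder L k π ∧
  ∀ c, c ≤ L → ((Finset.Icc 1 k).filter (fun j => π j = c)).card = s c

/-- Vertical order of distribution `s` (possibly with separate entries, whose positions are
not constrained here):  over the cluster positions (`π i ≠ 0`) in increasing order, relative
locations are nondecreasing, with ties broken by increasing cluster index. -/
def IsVerticalOrder (L k : ℕ) (s : ℕ → ℕ) (π : ℕ → ℕ) : Prop :=
  MemPi L k s π ∧
  ∀ i j, 1 ≤ i → i < j → j ≤ k → π i ≠ 0 → π j ≠ 0 →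
    relLoc π i ≤ relLoc π j ∧ (relLoc π i = relLoc π j → π i < π j)

/-- The distribution `s*` (no separate node): `s*_0 = 0`, `s*_i = R` for `1 ≤ i ≤ ⌊k/R⌋`,
`s*_{⌊k/R⌋+1} = k − ⌊k/R⌋·R`, and `0` beyond. -/
def sStar0 (R k : ℕ) : ℕ → ℕ := fun i =>
  if i = 0 then 0
  else if i ≤ k / R then R
  else if i = k / R + 1 then k - k / R * R
  else 0

/-- The distribution with one separate node: `s_0 = 1`, `s_i = R` for `1 ≤ i ≤ ⌊(k−1)/R⌋`,
`s_{⌊(k−1)/R⌋+1} = (k−1) − ⌊(k−1)/R⌋·R`, and `0` beyond. -/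
def sStar1 (R k : ℕ) : ℕ → ℕ := fun i =>
  if i = 0 then 1
  else if i ≤ (k - 1) / R then R
  else if i = (k - 1) / R + 1 then (k - 1) - (k - 1) / R * R
  else 0

/-- `π^(j)`: the cluster order with exactly one separate entry, located at position `j`,
whose cluster entries form the vertical order of the distribution `sStar1 R k`. -/
def IsPiJ (L R k j : ℕ) (π : ℕ → ℕ) : Prop :=
  π j = 0 ∧ IsVerticalOrder L k (sStar1 R k) π

lemma relLoc_pos (π : ℕ → ℕ) (i : ℕ) (hi : 1 ≤ i) : 1 ≤ relLoc π i := by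
  have : i ∈ (Finset.Icc 1 i).filter (fun j => π j = π i) := by
    simp [Finset.mem_filter, Finset.mem_Icc, hi]
  exact Finset.card_pos.mpr ⟨i, this⟩

lemma relLoc_le (π : ℕ → ℕ) (i : ℕ) : relLoc π i ≤ i := by
  calc relLoc π i ≤ (Finset.Icc 1 i).card := Finset.card_filter_le _ _
  _ = i := by simp

lemma exists_prev (π : ℕ → ℕ) (i : ℕ) (ht : 2 ≤ relLoc π (i+1)) :
    ∃ j, 1 ≤ j ∧ j ≤ i ∧ π j = π (i+1) ∧ relLoc π j = relLoc π (i+1) - 1 := by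
  set S := (Finset.Icc 1 (i+1)).filter (fun j => π j = π (i+1)) with hS
  have hScard : S.card = relLoc π (i+1) := rfl
  have hmem : i+1 ∈ S := by
    simp [hS, Finset.mem_filter, Finset.mem_Icc]
  set S' := S.erase (i+1) with hS'
  have hcard : S'.card = relLoc π (i+1) - 1 := by
    rw [hS', Finset.card_erase_of_mem hmem, hScard]
  have hne : S'.Nonempty := Finset.card_pos.mp (by omega)
  set j := S'.max' hne with hj
  have hjS' : j ∈ S' := Finset.max'_mem _ _
  have hjS : j ∈ S := Finset.mem_of_mem_erase hjS'
  have hjne : j ≠ i+1 := Finset.ne_of_mem_erase hjS'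
  simp only [hS, Finset.mem_filter, Finset.mem_Icc] at hjS
  have hji : j ≤ i := by omega
  refine ⟨j, hjS.1.1, hji, hjS.2, ?_⟩
  have hset : (Finset.Icc 1 j).filter (fun j' => π j' = π j) = S' := by
    apply Finset.Subset.antisymm
    · intro x hx
      simp only [Finset.mem_filter, Finset.mem_Icc] at hx
      simp only [hS', hS, Finset.mem_erase, Finset.mem_filter, Finset.mem_Icc]
      exact ⟨by omega, ⟨hx.1.1, by omega⟩, hx.2.trans hjS.2⟩
    · intro x hx
      have hxle : x ≤ j := Finset.le_max' _ _ hx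
      simp only [hS', hS, Finset.mem_erase, Finset.mem_filter, Finset.mem_Icc] at hx
      simp only [Finset.mem_filter, Finset.mem_Icc, hjS.2]
      exact ⟨⟨hx.2.1.1, hxle⟩, hx.2.2⟩
  show ((Finset.Icc 1 j).filter (fun j' => π j' = π j)).card = _
  rw [hset, hcard]

/-- the weights of `π^(k)` are nonincreasing over the cluster positions
`1, …, k−1`, and the separate position has minimal weight
`w_k(π^(k)) = (R + d_C − k)·β_C = (d_I + d_C + 1 − k)·β_C`. -/
theorem stmt11 (L R k dI dC : ℕ) (βI βC : ℝ)
    (hL : 1 ≤ L) (hR : 2 ≤ R) (hk : 2 ≤ k)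
    (hdI : dI = R - 1) (hdC : 1 ≤ dC) (hkd : k ≤ dI + dC)
    (hβ : βC ≤ βI) (hβC : 0 < βC)
    (hk1LR : k - 1 ≤ L * R)
    (π : ℕ → ℕ) (hπ : IsPiJ L R k k π) :
    (∀ i, 1 ≤ i → i + 1 ≤ k - 1 →
      weight dI dC βI βC π (i + 1) ≤ weight dI dC βI βC π i) ∧
    weight dI dC βI βC π k = ((R + dC - k : ℕ) : ℝ) * βC ∧
    weight dI dC βI βC π k = ((dI + dC + 1 - k : ℕ) : ℝ) * βC ∧
    (∀ i, 1 ≤ i → i ≤ k →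
      weight dI dC βI βC π k ≤ weight dI dC βI βC π i) := by
  obtain ⟨hπk, ⟨⟨hco, hcount⟩, hord⟩⟩ := hπ
  have hβI : (0:ℝ) ≤ βI := le_trans hβC.le hβ
  -- the only separate position is k
  have hzero : ((Finset.Icc 1 k).filter (fun j => π j = 0)) = {k} := by
    have h1 := hcount 0 (Nat.zero_le L)
    have hs : sStar1 R k 0 = 1 := by simp [sStar1]
    rw [hs] at h1
    obtain ⟨a, ha⟩ := Finset.card_eq_one.mp h1
    have hk0 : k ∈ (Finset.Icc 1 k).filter (fun j => π j = 0) := by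
      simp only [Finset.mem_filter, Finset.mem_Icc, hπk]
      exact ⟨⟨by omega, le_refl k⟩, trivial⟩
    rw [ha] at hk0 ⊢
    simp only [Finset.mem_singleton] at hk0
    rw [hk0]
  have hnz : ∀ i, 1 ≤ i → i ≤ k - 1 → π i ≠ 0 := by
    intro i h1 h2 h0
    have : i ∈ ((Finset.Icc 1 k).filter (fun j => π j = 0)) := by
      simp only [Finset.mem_filter, Finset.mem_Icc, h0]
      exact ⟨⟨h1, by omega⟩, trivial⟩
    rw [hzero, Finset.mem_singleton] at this
    omega
  -- relLoc step facts for consecutive cluster positions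
  have hstep : ∀ i, 1 ≤ i → i + 1 ≤ k - 1 →
      relLoc π i ≤ relLoc π (i+1) ∧ relLoc π (i+1) ≤ relLoc π i + 1 := by
    intro i h1 h2
    have hnzi : π i ≠ 0 := hnz i h1 (by omega)
    have hnzi1 : π (i+1) ≠ 0 := hnz (i+1) (by omega) h2
    have hle : relLoc π i ≤ relLoc π (i+1) :=
      (hord i (i+1) h1 (by omega) (by omega) hnzi hnzi1).1
    refine ⟨hle, ?_⟩
    by_cases ht : 2 ≤ relLoc π (i+1)
    · obtain ⟨j, hj1, hji, hjπ, hjrel⟩ := exists_prev π i ht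
      rcases eq_or_lt_of_le hji with rfl | hlt
      · omega
      · have := (hord j i hj1 hlt (by omega) (by rw [hjπ]; exact hnzi1) hnzi).1
        omega
    · have := relLoc_pos π i h1
      omega
  -- Part 1: monotonicity
  have part1 : ∀ i, 1 ≤ i → i + 1 ≤ k - 1 →
      weight dI dC βI βC π (i + 1) ≤ weight dI dC βI βC π i := by
    intro i h1 h2
    have hnzi : π i ≠ 0 := hnz i h1 (by omega)
    have hnzi1 : π (i+1) ≠ 0 := hnz (i+1) (by omega) h2
    obtain ⟨hle, hle1⟩ := hstep i h1 h2
    have hri : relLoc π i ≤ i := relLoc_le π i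
    have ha : aCoef dI π (i+1) ≤ aCoef dI π i := by
      simp only [aCoef]; omega
    have hb : bCoef dC π (i+1) ≤ bCoef dC π i := by
      simp only [bCoef]; omega
    rw [weight, weight, if_neg hnzi, if_neg hnzi1]
    exact add_le_add
      (mul_le_mul_of_nonneg_right (by exact_mod_cast ha) hβI)
      (mul_le_mul_of_nonneg_right (by exact_mod_cast hb) hβC.le)
  have hwk : weight dI dC βI βC π k = ((dI + dC + 1 - k : ℕ) : ℝ) * βC := by
    rw [weight, if_pos hπk]
  have hRdI : (R + dC - k : ℕ) = (dI + dC + 1 - k : ℕ) := by omega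
  refine ⟨part1, by rw [hwk, hRdI], hwk, ?_⟩
  -- Part 3: minimality
  intro i h1 h2
  rcases eq_or_lt_of_le h2 with rfl | hlt
  · exact le_refl _
  · have hik : i ≤ k - 1 := by omega
    have hnzi : π i ≠ 0 := hnz i h1 hik
    have key : (dI + dC + 1 - k : ℕ) ≤ aCoef dI π i + bCoef dC π i := by
      have hri : relLoc π i ≤ i := relLoc_le π i
      simp only [aCoef, bCoef]; omega
    calc weight dI dC βI βC π k = ((dI + dC + 1 - k : ℕ) : ℝ) * βC := hwk
      _ ≤ ((aCoef dI π i + bCoef dC π i : ℕ) : ℝ) * βC :=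
          mul_le_mul_of_nonneg_right (by exact_mod_cast key) hβC.le
      _ = (aCoef dI π i : ℝ) * βC + (bCoef dC π i : ℝ) * βC := by push_cast; ring
      _ ≤ (aCoef dI π i : ℝ) * βI + (bCoef dC π i : ℝ) * βC := by
          exact add_le_add_left
            (mul_le_mul_of_nonneg_left hβ (by positivity)) _
      _ = weight dI dC βI βC π i := by rw [weight, if_neg hnzi]
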